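/- Let k : ℝ × ℝ → ℂ be measurable and essentially bounded with k(s, t) = 0 for almost every (s, t) outside the set {(s, t) : 0 ≤ s ≤ 1 and s ≤ t ≤ s + 1}. Let w ∈ L²(ℝ², ℂ) vanish almost everywhere outside [0, 1] × [0, 1], and let φ ∈ L²(ℝ, ℂ) vanish almost everywhere outside [0, 2]. Then ∫_ℝ ( ∫_ℝ k(s, t) w(s, t − s) ds ) · conj(φ(t)) dt = ∫_ℝ ∫_ℝ w(s, t) · k(s, s + t) · conj(φ(s + t)) ds dt; i.e. the adjoint of the integral operator 𝒢_k[w](t) = ∫ k(s, t) w(s, t − s) ds with respect to the L² inner products is given by 𝒢_k*[φ](s, t) = conj(k(s, s + t)) φ(s + t). -/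

import Mathlib

open MeasureTheory

/-- **The adjoint of the lifted autoconvolution integral operator.**
Let `k : ℝ × ℝ → ℂ` be measurable and essentially bounded, supported (a.e.) in
`{(s, t) : 0 ≤ s ≤ 1, s ≤ t ≤ s + 1}`, let `w ∈ L²(ℝ², ℂ)` vanish a.e. outside
`[0,1] × [0,1]` and `φ ∈ L²(ℝ, ℂ)` vanish a.e. outside `[0, 2]`.  Then
`∫ (∫ k (s, t) w (s, t − s) ds) conj (φ t) dt
   = ∫ ∫ w (s, t) k (s, s + t) conj (φ (s + t)) ds dt`,
i.e. the adjoint of `𝒢_k` is `𝒢_k*[φ](s, t) = conj (k (s, s + t)) φ (s + t)`. -/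
theorem adjoint_of_lifted_autoconvolution
    (k : ℝ × ℝ → ℂ) (hk : Measurable k)
    (C : ℝ) (hkbdd : ∀ᵐ p : ℝ × ℝ ∂volume, ‖k p‖ ≤ C)
    (hksupp : ∀ᵐ p : ℝ × ℝ ∂volume,
      ¬(0 ≤ p.1 ∧ p.1 ≤ 1 ∧ p.1 ≤ p.2 ∧ p.2 ≤ p.1 + 1) → k p = 0)
    (w : ℝ × ℝ → ℂ) (hw : MemLp w 2 volume)
    (hwsupp : ∀ᵐ p : ℝ × ℝ ∂volume,
      ¬(p.1 ∈ Set.Icc (0 : ℝ) 1 ∧ p.2 ∈ Set.Icc (0 : ℝ) 1) → w p = 0)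
    (φ : ℝ → ℂ) (hφ : MemLp φ 2 volume)
    (hφsupp : ∀ᵐ t ∂volume, t ∉ Set.Icc (0 : ℝ) 2 → φ t = 0) :
    (∫ t, (∫ s, k (s, t) * w (s, t - s) ∂volume) * (starRingEnd ℂ) (φ t) ∂volume) =
    ∫ t, ∫ s, w (s, t) * k (s, s + t) * (starRingEnd ℂ) (φ (s + t)) ∂volume ∂volume := by
  have hprod : (volume : Measure (ℝ × ℝ)) = (volume : Measure ℝ).prod volume :=
    (Measure.volume_eq_prod _ _)
  -- the shear `σ (s, t) = (s, t - s)` is measure preserving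
  have hσ : MeasurePreserving (fun p : ℝ × ℝ => (p.1, p.2 - p.1))
      (volume : Measure (ℝ × ℝ)) volume := by
    rw [hprod]
    exact MeasurePreserving.skew_product (MeasurePreserving.id _)
      (measurable_snd.sub measurable_fst)
      (Filter.Eventually.of_forall fun s =>
        (measurePreserving_sub_right (volume : Measure ℝ) s).map_eq)
  -- the shear `τ (s, t) = (s, s + t)` is measure preserving
  have hτ : MeasurePreserving (fun p : ℝ × ℝ => (p.1, p.1 + p.2))
      (volume : Measure (ℝ × ℝ)) volume := by
    rw [hprod]
    exact MeasurePreserving.skew_product (MeasurePreserving.id _)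
      (measurable_fst.add measurable_snd)
      (Filter.Eventually.of_forall fun s =>
        (measurePreserving_add_left (volume : Measure ℝ) s).map_eq)
  set F : ℝ × ℝ → ℂ :=
    fun p => k p * w (p.1, p.2 - p.1) * (starRingEnd ℂ) (φ p.2) with hF_def
  -- measurability of F
  have hwσ : MemLp (fun p : ℝ × ℝ => w (p.1, p.2 - p.1)) 2 volume :=
    hw.comp_measurePreserving hσ
  have hφsnd : AEStronglyMeasurable (fun p : ℝ × ℝ => φ p.2) volume := by
    rw [hprod]
    exact hφ.1.comp_quasiMeasurePreserving Measure.quasiMeasurePreserving_snd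
  have hFm : AEStronglyMeasurable F volume :=
    ((hk.aestronglyMeasurable.mul hwσ.1).mul (Complex.continuous_conj.comp_aestronglyMeasurable hφsnd))
  -- dominating function
  set C' : ℝ := max C 0 with hC'
  set B : ℝ × ℝ → ℝ :=
    fun p => Set.indicator (Set.Icc (0 : ℝ) 1) (fun _ => (1 : ℝ)) p.1 * ‖φ p.2‖ with hB_def
  have hBm : AEStronglyMeasurable B volume := by
    apply AEStronglyMeasurable.mul _ hφsnd.norm
    refine ((measurable_const.indicator measurableSet_Icc).comp measurable_fst).aestronglyMeasurable
  have hB : MemLp B 2 volume := by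
    rw [memLp_two_iff_integrable_sq_norm hBm]
    have h1 : Integrable (fun s : ℝ => Set.indicator (Set.Icc (0 : ℝ) 1) (fun _ => (1 : ℝ)) s)
        volume := by
      rw [integrable_indicator_iff measurableSet_Icc]
      exact integrableOn_const (by simp [Real.volume_Icc])
    have h2 : Integrable (fun t : ℝ => ‖φ t‖ ^ 2) volume :=
      (memLp_two_iff_integrable_sq_norm hφ.1).1 hφ
    have := h1.mul_prod h2
    rw [← hprod] at this
    refine this.congr (Filter.Eventually.of_forall fun p => ?_)
    by_cases hs : p.1 ∈ Set.Icc (0 : ℝ) 1 <;>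
      simp [hB_def, hs, mul_pow, Real.norm_eq_abs, sq_abs]
  -- the dominating function is integrable
  have hdom : Integrable (fun p : ℝ × ℝ => C' * (‖w (p.1, p.2 - p.1)‖ * B p)) volume := by
    apply Integrable.const_mul
    have := (hB.smul (𝕜 := ℝ) (r := 1) hwσ.norm)
    rw [memLp_one_iff_integrable] at this
    exact this.congr (Filter.Eventually.of_forall fun p => by
      simp [Pi.smul_apply, smul_eq_mul])
  -- F is integrable
  have hF : Integrable F volume := by
    refine hdom.mono' hFm ?_
    filter_upwards [hkbdd, hksupp] with p hb hs
    by_cases h1 : 0 ≤ p.1 ∧ p.1 ≤ 1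
    · have hCle : ‖k p‖ ≤ C' := hb.trans (le_max_left _ _)
      have : ‖F p‖ = ‖k p‖ * ‖w (p.1, p.2 - p.1)‖ * ‖φ p.2‖ := by
        simp [hF_def, norm_mul]
      rw [this]
      have hBp : B p = ‖φ p.2‖ := by
        simp [hB_def, Set.indicator_of_mem, Set.mem_Icc.2 h1]
      rw [hBp, mul_assoc]
      exact mul_le_mul_of_nonneg_right hCle
        (mul_nonneg (norm_nonneg _) (norm_nonneg _))
    · have : k p = 0 := hs (fun h => h1 ⟨h.1, h.2.1⟩)
      have hFp : F p = 0 := by simp [hF_def, this]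
      rw [hFp, norm_zero]
      have hC0 : 0 ≤ C' := le_max_right _ _
      have hB0 : 0 ≤ B p := by
        apply mul_nonneg _ (norm_nonneg _)
        exact Set.indicator_nonneg (fun _ _ => zero_le_one) _
      positivity
  -- the composed integrand
  set G : ℝ × ℝ → ℂ :=
    fun p => w p * k (p.1, p.1 + p.2) * (starRingEnd ℂ) (φ (p.1 + p.2)) with hG_def
  have hG : Integrable G volume := by
    have : Integrable (F ∘ fun p : ℝ × ℝ => (p.1, p.1 + p.2)) volume :=
      (hτ.integrable_comp hFm).2 hF
    refine this.congr (Filter.Eventually.of_forall fun p => ?_)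
    simp only [Function.comp_apply, hF_def, hG_def, add_sub_cancel_left]
    ring
  -- Fubini + change of variables
  have step1 : (∫ t, (∫ s, k (s, t) * w (s, t - s) ∂volume) * (starRingEnd ℂ) (φ t) ∂volume)
      = ∫ t, ∫ s, F (s, t) ∂volume ∂volume := by
    refine integral_congr_ae (Filter.Eventually.of_forall fun t => ?_)
    show (∫ s, k (s, t) * w (s, t - s) ∂volume) * (starRingEnd ℂ) (φ t)
      = ∫ s, F (s, t) ∂volume
    rw [← integral_mul_const]
  have hFswap : Integrable (Function.uncurry fun t s => F (s, t))
      ((volume : Measure ℝ).prod volume) := by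
    have : Integrable F ((volume : Measure ℝ).prod volume) := by rwa [← hprod]
    exact this.swap
  have step2 : (∫ t, ∫ s, F (s, t) ∂volume ∂volume)
      = ∫ s, ∫ t, F (s, t) ∂volume ∂volume :=
    integral_integral_swap hFswap
  have step3 : ∀ s : ℝ, (∫ t, F (s, t) ∂volume) = ∫ t, G (s, t) ∂volume := by
    intro s
    rw [← integral_add_left_eq_self (fun t => F (s, t)) s]
    refine integral_congr_ae (Filter.Eventually.of_forall fun t => ?_)
    simp only [hF_def, hG_def, add_sub_cancel_left]
    ring
  have hGswap : Integrable (Function.uncurry fun s t => G (s, t))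
      ((volume : Measure ℝ).prod volume) := by
    have : Integrable G ((volume : Measure ℝ).prod volume) := by rwa [← hprod]
    exact this.congr (Filter.Eventually.of_forall fun p => rfl)
  have step4 : (∫ s, ∫ t, G (s, t) ∂volume ∂volume)
      = ∫ t, ∫ s, G (s, t) ∂volume ∂volume :=
    integral_integral_swap hGswap
  rw [step1, step2]
  simp_rw [step3]
  rw [step4]
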